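/- For every complex number z = x + iy and every positive integer n, the normalized Hermite function satisfies |ζ_n(z)| ≤ (2e³/π²)^{1/4} · e^{|z|²/2 + x² + |y|} · e^{2n|y|}. -/

import Mathlib

open Complex Real

/-- Physicists' Hermite polynomial, as an entire function:
`H n z = (-1)^n e^{z^2} (d/dz)^n e^{-z^2}`. -/
noncomputable def hermiteH (n : ℕ) (z : ℂ) : ℂ :=
  (-1) ^ n * Complex.exp (z ^ 2) * iteratedDeriv n (fun w => Complex.exp (-w ^ 2)) z

/-- Normalized Hermite function
`ζ_n(z) = (π^{1/4} 2^{n/2} (n!)^{1/2})⁻¹ (-1)^n e^{-z²/2} H_n(z)`. -/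
noncomputable def zetaH (n : ℕ) (z : ℂ) : ℂ :=
  (((Real.pi ^ ((1 : ℝ) / 4) * 2 ^ ((n : ℝ) / 2) * Real.sqrt (n.factorial))⁻¹ : ℝ) : ℂ) *
    (-1) ^ n * Complex.exp (-z ^ 2 / 2) * hermiteH n z

section HermiteAux
open Polynomial

noncomputable def PH : ℕ → Polynomial ℝ
  | 0 => 1
  | 1 => 2 * Polynomial.X
  | (n+2) => 2 * Polynomial.X * PH (n+1) - (2*((n:Polynomial ℝ)+1)) * PH n

lemma PH_eq (n : ℕ) : PH (n+2) = 2 * Polynomial.X * PH (n+1) - (2*((n:Polynomial ℝ)+1)) * PH n :=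
  PH.eq_3 n

theorem PH_deriv : ∀ n : ℕ, (PH (n+1)).derivative = 2*((n:Polynomial ℝ)+1) * PH n
  | 0 => by simp [PH]
  | 1 => by
      simp only [PH, derivative_sub, derivative_mul, derivative_ofNat, derivative_X,
        derivative_natCast, derivative_one, Nat.cast_zero]
      simp
      ring
  | (n+2) => by
      have ih1 : derivative (PH (n+2)) = 2*((n:Polynomial ℝ)+1+1) * PH (n+1) := by
        have := PH_deriv (n+1); rw [this]; push_cast; ring
      have ih0 := PH_deriv n
      have e3 : PH (n+3) = 2 * Polynomial.X * PH (n+2) - (2*((n:Polynomial ℝ)+1+1)) * PH (n+1) := by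
        rw [show n+3 = (n+1)+2 from rfl, PH_eq]; push_cast; ring
      have e2 := PH_eq n
      rw [show n+2+1 = n+3 from rfl, e3, derivative_sub]
      simp only [derivative_mul, derivative_X, derivative_ofNat, derivative_natCast,
        derivative_one, derivative_add]
      rw [ih1, ih0, e2]
      push_cast
      ring

lemma PH_succ : ∀ n : ℕ, PH (n+1) = 2 * Polynomial.X * PH n - derivative (PH n)
  | 0 => by simp [PH]
  | (n+1) => by rw [PH_eq, PH_deriv]

lemma PH_iter : ∀ (k n : ℕ), derivative^[k] (PH n)
    = (2:Polynomial ℝ)^k * ((n.descFactorial k : ℕ) : Polynomial ℝ) * PH (n-k)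
  | 0, n => by simp
  | (k+1), n => by
      rw [Function.iterate_succ_apply', PH_iter k n]
      rcases Nat.lt_or_ge k n with h | h
      · have h1 : n - k = (n - (k+1)) + 1 := by omega
        set m := n - (k+1) with hm
        rw [h1]
        rw [derivative_mul, PH_deriv m]
        have hdf : (n.descFactorial (k+1) : ℕ) = (m+1) * n.descFactorial k := by
          rw [Nat.descFactorial_succ, h1]
        rw [hdf]
        simp only [derivative_mul, derivative_pow, derivative_ofNat, derivative_natCast]
        push_cast
        ring
      · have h0 : n - k = 0 := by omega
        have h0' : n - (k+1) = 0 := by omega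
        have hdf : n.descFactorial (k+1) = 0 := by
          rw [Nat.descFactorial_eq_zero_iff_lt]; omega
        rw [h0, h0', hdf]
        simp only [Nat.cast_zero, mul_zero, zero_mul, derivative_zero, Nat.cast_ofNat]
        simp [PH]

lemma PH_natDegree_le : ∀ n : ℕ, (PH n).natDegree ≤ n
  | 0 => by simp [PH]
  | 1 => by
      refine le_trans (natDegree_mul_le) ?_
      simp
  | (n+2) => by
      rw [PH_eq]
      refine le_trans (natDegree_sub_le _ _) (max_le ?_ ?_)
      · refine le_trans (natDegree_mul_le) ?_
        have := PH_natDegree_le (n+1)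
        have h2 : (2 * Polynomial.X : Polynomial ℝ).natDegree ≤ 1 := by
          refine le_trans natDegree_mul_le ?_; simp
        omega
      · refine le_trans (natDegree_mul_le) ?_
        have := PH_natDegree_le n
        have h2 : ((2*((n:Polynomial ℝ)+1))).natDegree ≤ 0 := by
          refine le_trans natDegree_mul_le ?_
          have : ((n:Polynomial ℝ)+1).natDegree ≤ 0 :=
            le_trans (natDegree_add_le _ _) (by simp)
          simp_all
        omega

lemma PH_ode : ∀ n : ℕ, derivative (derivative (PH n))
    = 2 * Polynomial.X * derivative (PH n) - (2*(n:Polynomial ℝ)) * PH n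
  | 0 => by simp [PH]
  | 1 => by
      rw [show derivative (PH 1) = derivative (PH (0+1)) from rfl, PH_deriv]
      simp [PH]
      ring
  | (n+2) => by
      have d2 : derivative (PH (n+2)) = 2*((n:Polynomial ℝ)+1+1) * PH (n+1) := by
        rw [show n+2 = (n+1)+1 from rfl, PH_deriv]; push_cast; ring
      rw [d2]
      simp only [derivative_mul, derivative_ofNat, derivative_natCast, derivative_add,
        derivative_one, PH_deriv n]
      rw [PH_eq]
      push_cast
      ring

lemma PH_eval0_sq : ∀ n : ℕ, (Polynomial.eval 0 (PH n))^2 ≤ 2^n * (n.factorial : ℝ)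
  | 0 => by simp [PH]
  | 1 => by simp [PH]
  | (n+2) => by
      have ih := PH_eval0_sq n
      have he : Polynomial.eval 0 (PH (n+2)) = -(2*((n:ℝ)+1)) * Polynomial.eval 0 (PH n) := by
        rw [PH_eq]; simp
      rw [he]
      have h1 : (-(2*((n:ℝ)+1)) * Polynomial.eval 0 (PH n))^2
          = 4*((n:ℝ)+1)^2 * (Polynomial.eval 0 (PH n))^2 := by ring
      rw [h1]
      have hn : (0:ℝ) ≤ 4*((n:ℝ)+1)^2 := by positivity
      have hrhs : (2:ℝ)^(n+2) * ((n+2).factorial : ℝ)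
          = (4*((n:ℝ)+1)*((n:ℝ)+2)) * (2^n * (n.factorial : ℝ)) := by
        rw [Nat.factorial_succ, Nat.factorial_succ]
        push_cast
        ring
      rw [hrhs]
      have hb : (0:ℝ) ≤ 2^n * (n.factorial : ℝ) := by positivity
      calc 4*((n:ℝ)+1)^2 * (Polynomial.eval 0 (PH n))^2
          ≤ 4*((n:ℝ)+1)^2 * (2^n * (n.factorial:ℝ)) := mul_le_mul_of_nonneg_left ih hn
        _ ≤ (4*((n:ℝ)+1)*((n:ℝ)+2)) * (2^n * (n.factorial:ℝ)) := by
            refine mul_le_mul_of_nonneg_right ?_ hb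
            nlinarith [Nat.cast_nonneg (α := ℝ) n]

lemma PH_global : ∀ (n : ℕ) (x : ℝ),
    |Polynomial.eval x (PH n)| ≤ (|x| + Real.sqrt (x^2 + 2*n))^n
  | 0, x => by simp [PH]
  | 1, x => by
      have h1 : Polynomial.eval x (PH 1) = 2*x := by simp [PH]
      rw [h1]
      have hs : |x| ≤ Real.sqrt (x^2 + 2*1) := by
        rw [show |x| = Real.sqrt (x^2) by rw [Real.sqrt_sq_eq_abs]]
        apply Real.sqrt_le_sqrt; nlinarith
      rw [abs_mul, pow_one, _root_.abs_two]
      push_cast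
      push_cast at hs
      nlinarith [abs_nonneg x]
  | (n+2), x => by
      have ihA := PH_global (n+1) x
      have ihB := PH_global n x
      set s := |x| with hs
      have hs0 : 0 ≤ s := abs_nonneg x
      set v2 := s + Real.sqrt (x^2 + 2*(n+2)) with hv2def
      have hv20 : 0 ≤ v2 := by positivity
      have hsq : v2^2 = 2*s*v2 + (2*(n:ℝ)+4) := by
        rw [hv2def]
        have h := Real.sq_sqrt (by positivity : (0:ℝ) ≤ x^2 + 2*((n:ℝ)+2))
        have hxs : s^2 = x^2 := _root_.sq_abs x
        push_cast
        nlinarith [h]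
      have hmono1 : Real.sqrt (x^2 + 2*((n:ℝ)+1)) ≤ Real.sqrt (x^2 + 2*((n:ℝ)+2)) := by
        apply Real.sqrt_le_sqrt; linarith
      have hmono0 : Real.sqrt (x^2 + 2*(n:ℝ)) ≤ Real.sqrt (x^2 + 2*((n:ℝ)+2)) := by
        apply Real.sqrt_le_sqrt; linarith
      have hA : |Polynomial.eval x (PH (n+1))| ≤ v2^(n+1) := by
        refine le_trans ihA ?_
        apply pow_le_pow_left₀ (by positivity)
        push_cast
        linarith
      have hB : |Polynomial.eval x (PH n)| ≤ v2^n := by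
        refine le_trans ihB ?_
        apply pow_le_pow_left₀ (by positivity)
        push_cast
        linarith
      have htri : |Polynomial.eval x (PH (n+2))|
          ≤ 2*s*|Polynomial.eval x (PH (n+1))| + (2*(n:ℝ)+2)*|Polynomial.eval x (PH n)| := by
        rw [PH_eq]
        simp only [eval_sub, eval_mul, eval_ofNat, eval_X, eval_add, eval_natCast, eval_one]
        refine le_trans (abs_sub _ _) ?_
        rw [abs_mul, abs_mul, abs_mul, abs_mul, _root_.abs_two,
          _root_.abs_of_nonneg (show (0:ℝ) ≤ (n:ℝ)+1 by positivity), ← hs]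
        apply le_of_eq
        ring
      refine le_trans htri ?_
      have key : 2*s*v2^(n+1) + (2*(n:ℝ)+2)*v2^n ≤ v2^(n+2) := by
        have e1 : v2^(n+1) = v2^n * v2 := by ring
        have e2 : v2^(n+2) = v2^n * v2^2 := by ring
        rw [e1, e2, hsq]
        have hpn : (0:ℝ) ≤ v2^n := by positivity
        nlinarith [hpn]
      have c1 : 2*s*|Polynomial.eval x (PH (n+1))| ≤ 2*s*v2^(n+1) := by
        apply mul_le_mul_of_nonneg_left hA (by positivity)
      have c2 : (2*(n:ℝ)+2)*|Polynomial.eval x (PH n)| ≤ (2*(n:ℝ)+2)*v2^n := by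
        apply mul_le_mul_of_nonneg_left hB (by positivity)
      push_cast
      push_cast at key c1 c2
      linarith

lemma PH_energy (m : ℕ) (x : ℝ) :
    (2*(m:ℝ)+1 - x^2) * (Real.exp (-x^2/2) * Polynomial.eval x (PH m))^2
      ≤ (Real.exp (-0^2/2) * Polynomial.eval 0 (Polynomial.derivative (PH m))
          - 0 * (Real.exp (-0^2/2) * Polynomial.eval 0 (PH m)))^2
        + (2*(m:ℝ)+1) * (Real.exp (-0^2/2) * Polynomial.eval 0 (PH m))^2 := by
  set p := PH m with hp
  set w : ℝ → ℝ := fun t => Real.exp (-t^2/2) * Polynomial.eval t p with hwdef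
  set v : ℝ → ℝ := fun t => Real.exp (-t^2/2) *
    (Polynomial.eval t (Polynomial.derivative p) - t * Polynomial.eval t p) with hvdef
  have hgauss : ∀ t : ℝ, HasDerivAt (fun u : ℝ => Real.exp (-u^2/2)) (-t * Real.exp (-t^2/2)) t := by
    intro t
    have h1 : HasDerivAt (fun u : ℝ => -u^2/2) (-t) t := by
      have := (hasDerivAt_pow 2 t).neg.div_const 2
      refine this.congr_deriv ?_
      push_cast; ring
    have := h1.exp
    convert this using 1
    ring
  have hw : ∀ t : ℝ, HasDerivAt w (v t) t := by
    intro t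
    have := (hgauss t).mul (Polynomial.hasDerivAt p t)
    refine this.congr_deriv ?_
    simp only [hvdef]
    ring
  have hv : ∀ t : ℝ, HasDerivAt v ((t^2 - (2*(m:ℝ)+1)) * w t) t := by
    intro t
    have hg : HasDerivAt (fun u : ℝ => Polynomial.eval u (Polynomial.derivative p) - u * Polynomial.eval u p)
        (Polynomial.eval t (Polynomial.derivative (Polynomial.derivative p))
          - (Polynomial.eval t p + t * Polynomial.eval t (Polynomial.derivative p))) t := by
      have := (Polynomial.hasDerivAt (Polynomial.derivative p) t).sub
        ((hasDerivAt_id t).mul (Polynomial.hasDerivAt p t))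
      refine this.congr_deriv ?_
      simp
    have := (hgauss t).mul hg
    refine this.congr_deriv ?_
    have hode : Polynomial.eval t (Polynomial.derivative (Polynomial.derivative p))
        = 2*t*Polynomial.eval t (Polynomial.derivative p) - 2*(m:ℝ)*Polynomial.eval t p := by
      rw [hp, PH_ode m]
      simp
    simp only [hwdef]
    rw [hode]
    ring
  set E : ℝ → ℝ := fun t => (v t)^2 + (2*(m:ℝ)+1 - t^2)*(w t)^2 with hEdef
  have hE : ∀ t : ℝ, HasDerivAt E (-2*t*(w t)^2) t := by
    intro t
    have h1 := ((hv t).pow 2)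
    have h2 := (((hasDerivAt_id t).pow 2).const_sub (2*(m:ℝ)+1)).mul ((hw t).pow 2)
    have := h1.add h2
    refine this.congr_deriv ?_
    simp only [hEdef, hwdef, hvdef, pow_one, id_eq, Pi.pow_apply]
    push_cast
    ring
  have hcont : Continuous E := by
    have : Differentiable ℝ E := fun t => (hE t).differentiableAt
    exact this.continuous
  have hE0 : ∀ t : ℝ, E t ≤ E 0 := by
    intro t
    rcases le_or_gt 0 t with h | h
    · have hanti : AntitoneOn E (Set.Ici (0:ℝ)) := by
        apply antitoneOn_of_deriv_nonpos (convex_Ici 0) hcont.continuousOn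
        · intro u hu
          exact (hE u).differentiableAt.differentiableWithinAt
        · intro u hu
          rw [(hE u).deriv]
          simp only [interior_Ici, Set.mem_Ioi] at hu
          nlinarith [sq_nonneg (w u), hu]
      exact hanti (by simp) (by simpa using h) h
    · have hmono : MonotoneOn E (Set.Iic (0:ℝ)) := by
        apply monotoneOn_of_deriv_nonneg (convex_Iic 0) hcont.continuousOn
        · intro u hu
          exact (hE u).differentiableAt.differentiableWithinAt
        · intro u hu
          rw [(hE u).deriv]
          simp only [interior_Iic, Set.mem_Iio] at hu
          nlinarith [sq_nonneg (w u)]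
      exact hmono (by simpa using h.le) (by simp) h.le
  have hx := hE0 x
  have hle : (2*(m:ℝ)+1 - x^2) * (w x)^2 ≤ E x := by
    simp only [hEdef]
    nlinarith [sq_nonneg (v x)]
  calc (2*(m:ℝ)+1 - x^2) * (w x)^2 ≤ E x := hle
    _ ≤ E 0 := hx
    _ = _ := by simp only [hEdef, hvdef, hwdef]; norm_num

lemma PH_deriv_eval0_sq : ∀ m : ℕ,
    (Polynomial.eval 0 (Polynomial.derivative (PH m)))^2 ≤ 2*(m:ℝ) * (2^m * (m.factorial:ℝ))
  | 0 => by simp [PH]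
  | (k+1) => by
      rw [PH_deriv k]
      have ih := PH_eval0_sq k
      simp only [eval_mul, eval_ofNat, eval_add, eval_natCast, eval_one]
      have h1 : ((2:ℝ) * ((k:ℝ)+1) * Polynomial.eval 0 (PH k))^2
          = 4*((k:ℝ)+1)^2 * (Polynomial.eval 0 (PH k))^2 := by ring
      rw [h1]
      have h2 : (2:ℝ)^(k+1) * ((k+1).factorial : ℝ) = 2*((k:ℝ)+1) * (2^k * (k.factorial:ℝ)) := by
        rw [Nat.factorial_succ]; push_cast; ring
      have hb : (0:ℝ) ≤ 4*((k:ℝ)+1)^2 := by positivity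
      have hmm := mul_le_mul_of_nonneg_left ih hb
      push_cast [Nat.factorial_succ, pow_succ]
      push_cast at hmm
      nlinarith [hmm]

-- region 1

lemma PH_region1 (m : ℕ) (x : ℝ) (hm : 1 ≤ m) (hx : x^2 ≤ (m:ℝ)) :
    |Polynomial.eval x (PH m)| ≤ Real.sqrt 2 * Real.sqrt (2^m * (m.factorial:ℝ)) * Real.exp (2*x^2) := by
  have hE := PH_energy m x
  have hd0 := PH_deriv_eval0_sq m
  have h00 := PH_eval0_sq m
  set F : ℝ := 2^m * (m.factorial:ℝ) with hF
  have hF0 : 0 < F := by rw [hF]; positivity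
  have hE0 : (Real.exp (-0^2/2) * Polynomial.eval 0 (Polynomial.derivative (PH m))
          - 0 * (Real.exp (-0^2/2) * Polynomial.eval 0 (PH m)))^2
        + (2*(m:ℝ)+1) * (Real.exp (-0^2/2) * Polynomial.eval 0 (PH m))^2
        ≤ (4*(m:ℝ)+1) * F := by
    have e0 : Real.exp (-(0:ℝ)^2/2) = 1 := by norm_num
    rw [e0]
    simp only [one_mul, zero_mul, sub_zero]
    have hm0 : (0:ℝ) ≤ 2*(m:ℝ)+1 := by positivity
    nlinarith [hd0, h00, sq_nonneg (Polynomial.eval 0 (PH m))]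
  have hkey : (2*(m:ℝ)+1 - x^2) * (Real.exp (-x^2/2) * Polynomial.eval x (PH m))^2
      ≤ (4*(m:ℝ)+1) * F := le_trans hE hE0
  -- now (4m+1) ≤ 2*(2m+1-x^2)*exp(3x^2)
  have hden : (m:ℝ) + 1 ≤ 2*(m:ℝ)+1 - x^2 := by
    have : (1:ℝ) ≤ (m:ℝ) := by exact_mod_cast hm
    linarith
  have hden0 : (0:ℝ) < 2*(m:ℝ)+1 - x^2 := by linarith [sq_nonneg x, hden,
    (by exact_mod_cast Nat.zero_le m : (0:ℝ) ≤ (m:ℝ))]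
  have hexp : 1 + 3*x^2 ≤ Real.exp (3*x^2) := by
    have := Real.add_one_le_exp (3*x^2)
    linarith
  have hfrac : (4*(m:ℝ)+1) ≤ 2 * (2*(m:ℝ)+1 - x^2) * Real.exp (3*x^2) := by
    have h1 : (4*(m:ℝ)+1) ≤ 2 * (2*(m:ℝ)+1 - x^2) * (1 + 3*x^2) := by
      nlinarith [sq_nonneg x, hx]
    have h2 : 2 * (2*(m:ℝ)+1 - x^2) * (1 + 3*x^2) ≤ 2 * (2*(m:ℝ)+1 - x^2) * Real.exp (3*x^2) := by
      apply mul_le_mul_of_nonneg_left hexp (by positivity)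
    linarith
  -- so w^2 ≤ 2 F exp(3x^2), eval^2 ≤ 2 F exp(4x^2)
  have hw2 : (Real.exp (-x^2/2) * Polynomial.eval x (PH m))^2 ≤ 2 * F * Real.exp (3*x^2) := by
    rw [← mul_le_mul_iff_right₀ hden0]
    calc (2*(m:ℝ)+1 - x^2) * (Real.exp (-x^2/2) * Polynomial.eval x (PH m))^2
        ≤ (4*(m:ℝ)+1) * F := hkey
      _ ≤ (2 * (2*(m:ℝ)+1 - x^2) * Real.exp (3*x^2)) * F := by
          apply mul_le_mul_of_nonneg_right hfrac hF0.le
      _ = (2*(m:ℝ)+1 - x^2) * (2 * F * Real.exp (3*x^2)) := by ring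
  have heval2 : (Polynomial.eval x (PH m))^2 ≤ 2 * F * Real.exp (4*x^2) := by
    have hexpand : (Real.exp (-x^2/2) * Polynomial.eval x (PH m))^2
        = Real.exp (-x^2) * (Polynomial.eval x (PH m))^2 := by
      rw [mul_pow, pow_two (Real.exp (-x^2/2)), ← Real.exp_add]
      congr 2
      ring
    rw [hexpand] at hw2
    have h3 : Real.exp (-x^2) * (Polynomial.eval x (PH m))^2 ≤ 2 * F * Real.exp (3*x^2) := hw2
    have h4 : (Polynomial.eval x (PH m))^2 = Real.exp (x^2) * (Real.exp (-x^2) * (Polynomial.eval x (PH m))^2) := by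
      rw [← mul_assoc, ← Real.exp_add]
      norm_num
    rw [h4]
    calc Real.exp (x^2) * (Real.exp (-x^2) * (Polynomial.eval x (PH m))^2)
        ≤ Real.exp (x^2) * (2 * F * Real.exp (3*x^2)) := by
          apply mul_le_mul_of_nonneg_left h3 (Real.exp_nonneg _)
      _ = 2 * F * Real.exp (4*x^2) := by
          rw [mul_comm (Real.exp (x^2)) _, mul_assoc, ← Real.exp_add]
          ring_nf
  -- conclude
  have hB : (0:ℝ) ≤ Real.sqrt 2 * Real.sqrt F * Real.exp (2*x^2) := by positivity
  rw [← Real.sqrt_sq_eq_abs]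
  apply Real.sqrt_le_sqrt at heval2
  refine le_trans heval2 ?_
  rw [show (2:ℝ) * F * Real.exp (4*x^2) = (Real.sqrt 2 * Real.sqrt F * Real.exp (2*x^2))^2 by
    rw [mul_pow, mul_pow, Real.sq_sqrt (by norm_num : (0:ℝ) ≤ 2), Real.sq_sqrt hF0.le,
      pow_two (Real.exp (2*x^2)), ← Real.exp_add]
    congr 2
    ring]
  rw [Real.sqrt_sq hB]

lemma pow_le_factorial_mul_exp (m : ℕ) (t : ℝ) (ht : 0 ≤ t) :
    t^m ≤ (m.factorial : ℝ) * Real.exp t := by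
  have h1 : t^m / (m.factorial : ℝ) ≤ Real.exp t := by
    calc t^m / (m.factorial:ℝ) ≤ ∑ i ∈ Finset.range (m+1), t^i / (i.factorial:ℝ) := by
          refine Finset.single_le_sum (f := fun i => t^i / (i.factorial:ℝ)) ?_ ?_
          · intro i _; positivity
          · simp
      _ ≤ Real.exp t := Real.sum_le_exp_of_nonneg ht _
  have hf : (0:ℝ) < (m.factorial:ℝ) := by positivity
  rw [div_le_iff₀ hf] at h1
  linarith [h1]

lemma PH_region2 (m : ℕ) (x : ℝ) (hx : (m:ℝ) ≤ x^2) :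
    |Polynomial.eval x (PH m)| ≤ Real.sqrt (2^m * (m.factorial:ℝ)) * Real.exp (2*x^2) := by
  have hglob := PH_global m x
  have hs3 : Real.sqrt (x^2 + 2*m) ≤ Real.sqrt 3 * |x| := by
    rw [show Real.sqrt 3 * |x| = Real.sqrt 3 * Real.sqrt (x^2) by rw [Real.sqrt_sq_eq_abs],
      ← Real.sqrt_mul (by norm_num : (0:ℝ) ≤ 3)]
    apply Real.sqrt_le_sqrt
    nlinarith
  have hbase : |x| + Real.sqrt (x^2 + 2*m) ≤ (1 + Real.sqrt 3) * |x| := by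
    nlinarith [hs3, abs_nonneg x]
  have h1 : |Polynomial.eval x (PH m)| ≤ ((1 + Real.sqrt 3) * |x|)^m := by
    refine le_trans hglob (pow_le_pow_left₀ (by positivity) hbase m)
  have hxm : |x|^m ≤ Real.sqrt (m.factorial:ℝ) * Real.exp (x^2/2) := by
    have h2 : (|x|^m)^2 ≤ ((m.factorial:ℝ)) * Real.exp (x^2) := by
      have := pow_le_factorial_mul_exp m (x^2) (sq_nonneg x)
      calc (|x|^m)^2 = (|x|^2)^m := by rw [← pow_mul, ← pow_mul, mul_comm m 2]
        _ = (x^2)^m := by rw [_root_.sq_abs]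
        _ ≤ (m.factorial:ℝ) * Real.exp (x^2) := this
    have hrhs : Real.sqrt (m.factorial:ℝ) * Real.exp (x^2/2)
        = Real.sqrt ((m.factorial:ℝ) * Real.exp (x^2)) := by
      rw [Real.sqrt_mul (by positivity), Real.exp_half]
    rw [hrhs, ← Real.sqrt_sq (by positivity : (0:ℝ) ≤ |x|^m)]
    exact Real.sqrt_le_sqrt h2
  -- (1+√3)^m ≤ sqrt(2^m) * exp(3x²/2)
  have h3 : (1 + Real.sqrt 3) ≤ Real.sqrt 2 * Real.exp (3/2) := by
    have hs3 : Real.sqrt 3 ≤ 7/4 := by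
      rw [show (7:ℝ)/4 = Real.sqrt ((7/4)^2) by rw [Real.sqrt_sq (by norm_num)]]
      apply Real.sqrt_le_sqrt; norm_num
    have hs2 : (14:ℝ)/10 ≤ Real.sqrt 2 := by
      rw [show (14:ℝ)/10 = Real.sqrt ((14/10)^2) by rw [Real.sqrt_sq (by norm_num)]]
      apply Real.sqrt_le_sqrt; norm_num
    have he : (5:ℝ)/2 ≤ Real.exp (3/2) := by
      have := Real.add_one_le_exp (3/2 : ℝ)
      linarith
    nlinarith [Real.sqrt_nonneg (2:ℝ), Real.exp_pos (3/2:ℝ)]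
  have h4 : ((1 + Real.sqrt 3))^m ≤ (Real.sqrt 2 * Real.exp (3/2))^m :=
    pow_le_pow_left₀ (by positivity) h3 m
  have h5 : (Real.sqrt 2 * Real.exp (3/2))^m = Real.sqrt (2^m) * Real.exp (3*m/2) := by
    have hsq : Real.sqrt (2^m) = (Real.sqrt 2)^m := by
      have h0 : ((Real.sqrt 2)^m)^2 = 2^m := by
        rw [← pow_mul, mul_comm m 2, pow_mul, Real.sq_sqrt (by norm_num : (0:ℝ) ≤ 2)]
      rw [← h0, Real.sqrt_sq (by positivity)]
    rw [mul_pow, hsq, ← Real.exp_nat_mul]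
    congr 1
    ring
  have h6 : Real.exp (3*(m:ℝ)/2) ≤ Real.exp (3*x^2/2) := by
    apply Real.exp_le_exp.mpr
    linarith
  -- combine
  have habs : (0:ℝ) ≤ |x| := abs_nonneg x
  calc |Polynomial.eval x (PH m)| ≤ ((1 + Real.sqrt 3) * |x|)^m := h1
    _ = (1 + Real.sqrt 3)^m * |x|^m := mul_pow _ _ _
    _ ≤ (Real.sqrt 2 * Real.exp (3/2))^m * (Real.sqrt (m.factorial:ℝ) * Real.exp (x^2/2)) := by
        apply mul_le_mul h4 hxm (by positivity) (by positivity)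
    _ = Real.sqrt (2^m) * Real.exp (3*m/2) * (Real.sqrt (m.factorial:ℝ) * Real.exp (x^2/2)) := by
        rw [h5]
    _ ≤ Real.sqrt (2^m) * Real.exp (3*x^2/2) * (Real.sqrt (m.factorial:ℝ) * Real.exp (x^2/2)) := by
        apply mul_le_mul_of_nonneg_right ?_ (by positivity)
        apply mul_le_mul_of_nonneg_left h6 (by positivity)
    _ = Real.sqrt (2^m * (m.factorial:ℝ)) * Real.exp (2*x^2) := by
        rw [Real.sqrt_mul (by positivity),
          show Real.sqrt (2^m) * Real.exp (3*x^2/2) * (Real.sqrt (m.factorial:ℝ) * Real.exp (x^2/2))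
            = Real.sqrt (2^m) * Real.sqrt (m.factorial:ℝ) * (Real.exp (3*x^2/2) * Real.exp (x^2/2)) by ring,
          ← Real.exp_add, show 3*x^2/2 + x^2/2 = 2*x^2 by ring]

lemma PH_real_bound (m : ℕ) (x : ℝ) :
    |Polynomial.eval x (PH m)| ≤ Real.sqrt 2 * Real.sqrt (2^m * (m.factorial:ℝ)) * Real.exp (2*x^2) := by
  rcases Nat.eq_zero_or_pos m with h0 | hm
  · subst h0
    have : Polynomial.eval x (PH 0) = 1 := by simp [PH]
    rw [this]
    have h1 : (1:ℝ) ≤ Real.sqrt 2 := by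
      rw [show (1:ℝ) = Real.sqrt 1 by simp]
      exact Real.sqrt_le_sqrt (by norm_num)
    have h2 : (1:ℝ) ≤ Real.exp (2*x^2) := by
      rw [show (1:ℝ) = Real.exp 0 by simp]
      exact Real.exp_le_exp.mpr (by positivity)
    have h3 : Real.sqrt ((2:ℝ)^0 * ((0:ℕ).factorial:ℝ)) = 1 := by norm_num
    rw [abs_one, h3]
    nlinarith
  · rcases le_total (x^2) (m:ℝ) with hx | hx
    · exact PH_region1 m x hm hx
    · refine le_trans (PH_region2 m x hx) ?_
      have h1 : (1:ℝ) ≤ Real.sqrt 2 := by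
        rw [show (1:ℝ) = Real.sqrt 1 by simp]
        exact Real.sqrt_le_sqrt (by norm_num)
      have hBE : (0:ℝ) ≤ Real.sqrt ((2:ℝ)^m * (m.factorial:ℝ)) * Real.exp (2*x^2) := by positivity
      nlinarith [hBE, h1]

noncomputable def PC (n : ℕ) : Polynomial ℂ := (PH n).map (algebraMap ℝ ℂ)

lemma PC_succ (n : ℕ) : PC (n+1) = 2 * Polynomial.X * PC n - derivative (PC n) := by
  unfold PC
  rw [PH_succ n]
  simp [Polynomial.derivative_map, Polynomial.map_sub, Polynomial.map_mul]

lemma iteratedDeriv_gauss : ∀ n : ℕ, iteratedDeriv n (fun w : ℂ => Complex.exp (-w^2))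
    = fun z => (-1)^n * Polynomial.eval z (PC n) * Complex.exp (-z^2)
  | 0 => by
      funext z
      simp [PC, PH]
  | (n+1) => by
      rw [iteratedDeriv_succ, iteratedDeriv_gauss n]
      funext z
      have hexp : HasDerivAt (fun w : ℂ => Complex.exp (-w^2)) (Complex.exp (-z^2) * (-(2*z))) z := by
        have h1 : HasDerivAt (fun w : ℂ => -w^2) (-(2*z)) z := by
          have := (hasDerivAt_pow 2 z).neg
          refine this.congr_deriv ?_
          push_cast; ring
        exact h1.cexp
      have hpoly : HasDerivAt (fun w : ℂ => (-1:ℂ)^n * Polynomial.eval w (PC n))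
          ((-1:ℂ)^n * Polynomial.eval z (derivative (PC n))) z :=
        ((PC n).hasDerivAt z).const_mul _
      have hprod := hpoly.mul hexp
      have : deriv (fun z : ℂ => (-1)^n * Polynomial.eval z (PC n) * Complex.exp (-z^2)) z
          = (-1:ℂ)^n * Polynomial.eval z (derivative (PC n)) * Complex.exp (-z^2)
            + (-1:ℂ)^n * Polynomial.eval z (PC n) * (Complex.exp (-z^2) * (-(2*z))) := by
        exact hprod.deriv
      rw [this]
      rw [show Polynomial.eval z (PC (n+1))
          = 2*z*Polynomial.eval z (PC n) - Polynomial.eval z (derivative (PC n)) by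
        rw [PC_succ n]; simp]
      ring

lemma hermiteH_eq_eval (n : ℕ) (z : ℂ) :
    (-1:ℂ) ^ n * Complex.exp (z ^ 2) * iteratedDeriv n (fun w => Complex.exp (-w ^ 2)) z
      = Polynomial.eval z (PC n) := by
  have h : (fun w : ℂ => Complex.exp (-w ^ 2)) = (fun w : ℂ => Complex.exp (-w^2)) := rfl
  rw [h, iteratedDeriv_gauss n]
  have : (-1:ℂ)^n * Complex.exp (z^2) * ((-1)^n * Polynomial.eval z (PC n) * Complex.exp (-z^2))
      = ((-1:ℂ)^n)^2 * Polynomial.eval z (PC n) * (Complex.exp (z^2) * Complex.exp (-z^2)) := by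
    ring
  rw [this, ← Complex.exp_add]
  rw [show z^2 + -z^2 = 0 by ring, Complex.exp_zero]
  rw [← pow_mul, mul_comm n 2, pow_mul, neg_one_sq, one_pow]
  ring

lemma hasse_eval_norm (n i : ℕ) (x : ℝ) :
    (i.factorial : ℝ) * ‖Polynomial.eval (↑x : ℂ) (Polynomial.hasseDeriv i (PC n))‖
      = 2^i * (n.descFactorial i : ℝ) * |Polynomial.eval x (PH (n-i))| := by
  have h1 : (i.factorial • Polynomial.hasseDeriv i) (PC n) = Polynomial.derivative^[i] (PC n) :=
    congrFun (Polynomial.factorial_smul_hasseDeriv (R := ℂ) (k := i)) (PC n)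
  have h2 : Polynomial.derivative^[i] (PC n)
      = ((2:Polynomial ℝ)^i * ((n.descFactorial i : ℕ) : Polynomial ℝ) * PH (n-i)).map (algebraMap ℝ ℂ) := by
    rw [PC, Polynomial.iterate_derivative_map, PH_iter i n]
  have h3 : Polynomial.eval (↑x : ℂ) (Polynomial.derivative^[i] (PC n))
      = ((2^i * (n.descFactorial i : ℝ) * Polynomial.eval x (PH (n-i)) : ℝ) : ℂ) := by
    rw [h2, Polynomial.eval_map, show ((x:ℂ)) = algebraMap ℝ ℂ x from rfl,
      Polynomial.eval₂_at_apply]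
    push_cast
    simp
  have h4 : Polynomial.eval (↑x : ℂ) ((i.factorial • Polynomial.hasseDeriv i) (PC n))
      = (i.factorial : ℂ) * Polynomial.eval (↑x : ℂ) (Polynomial.hasseDeriv i (PC n)) := by
    simp [Polynomial.eval_smul, nsmul_eq_mul]
  have h5 : (i.factorial : ℂ) * Polynomial.eval (↑x : ℂ) (Polynomial.hasseDeriv i (PC n))
      = ((2^i * (n.descFactorial i : ℝ) * Polynomial.eval x (PH (n-i)) : ℝ) : ℂ) := by
    rw [← h4, h1, h3]
  have h6 := congrArg norm h5
  rw [norm_mul] at h6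
  rw [Complex.norm_natCast] at h6
  rw [Complex.norm_real] at h6
  rw [h6]
  rw [Real.norm_eq_abs, abs_mul, abs_mul]
  have : |(2:ℝ)^i| = 2^i := _root_.abs_of_nonneg (by positivity)
  rw [this, Nat.abs_cast]

lemma PC_eval_bound (n : ℕ) (z : ℂ) :
    ‖Polynomial.eval z (PC n)‖ ≤ Real.sqrt 2 * Real.sqrt (2^n * (n.factorial:ℝ)) *
      Real.exp (2*z.re^2) * Real.exp (Real.sqrt (2*n) * |z.im|) := by
  set x := z.re with hx
  set y := z.im with hy
  have hzdecomp : z = (↑y * Complex.I) + ↑x := by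
    rw [hx, hy]; rw [add_comm]; exact (Complex.re_add_im z).symm
  have hT : Polynomial.eval z (PC n) = (Polynomial.taylor (↑x : ℂ) (PC n)).eval (↑y * Complex.I) := by
    rw [Polynomial.taylor_eval, ← hzdecomp]
  have hdeg : (Polynomial.taylor (↑x : ℂ) (PC n)).natDegree < n + 1 := by
    rw [Polynomial.natDegree_taylor]
    have h1 := PH_natDegree_le n
    have h2 : (PC n).natDegree ≤ n := le_trans Polynomial.natDegree_map_le h1
    omega
  have hsum : Polynomial.eval z (PC n)
      = ∑ i ∈ Finset.range (n+1), (Polynomial.taylor (↑x : ℂ) (PC n)).coeff i * (↑y * Complex.I)^i := by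
    rw [hT, Polynomial.eval_eq_sum_range' hdeg]
  rw [hsum]
  set B := Real.sqrt 2 * Real.sqrt (2^n * (n.factorial:ℝ)) * Real.exp (2*x^2) with hB
  have hB0 : 0 ≤ B := by rw [hB]; positivity
  have hterm : ∀ i ∈ Finset.range (n+1),
      ‖(Polynomial.taylor (↑x : ℂ) (PC n)).coeff i * (↑y * Complex.I)^i‖
        ≤ B * ((Real.sqrt (2*n) * |y|)^i / (i.factorial : ℝ)) := by
    intro i hi
    have hin : i ≤ n := by simpa [Nat.lt_succ_iff] using hi
    rw [norm_mul, norm_pow, norm_mul, Complex.norm_I, Complex.norm_real, mul_one,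
      Real.norm_eq_abs]
    rw [Polynomial.taylor_coeff]
    -- use hasse_eval_norm
    have hne : (0:ℝ) < (i.factorial : ℝ) := by positivity
    have hEN := hasse_eval_norm n i x
    have hRB := PH_real_bound (n-i) x
    -- ‖eval hasse‖ = (2^i descF/i!) |eval PH (n-i)|
    have hcoeff : ‖Polynomial.eval (↑x : ℂ) (Polynomial.hasseDeriv i (PC n))‖
        = 2^i * (n.descFactorial i : ℝ) * |Polynomial.eval x (PH (n-i))| / (i.factorial:ℝ) := by
      field_simp at hEN ⊢
      linarith [hEN]
    rw [hcoeff]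
    rw [div_mul_eq_mul_div, div_le_iff₀ hne]
    -- key: 2^i descF |eval| |y|^i ≤ B (√(2n)|y|)^i /i! * i! = B (√(2n)|y|)^i
    have hkey : 2^i * (n.descFactorial i : ℝ) * Real.sqrt ((2:ℝ)^(n-i) * ((n-i).factorial:ℝ))
        ≤ Real.sqrt ((2:ℝ)^n * (n.factorial:ℝ)) * Real.sqrt (2*n)^i := by
      have hnat : (n.descFactorial i)^2 * (n-i).factorial ≤ n.factorial * n^i := by
        have hdf : n.descFactorial i * (n-i).factorial = n.factorial := by
          rw [Nat.descFactorial_eq_div hin]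
          exact Nat.div_mul_cancel (Nat.factorial_dvd_factorial (Nat.sub_le n i))
        · calc (n.descFactorial i)^2 * (n-i).factorial
              = n.descFactorial i * (n.descFactorial i * (n-i).factorial) := by ring
            _ = n.descFactorial i * n.factorial := by rw [hdf]
            _ ≤ n^i * n.factorial := by
                exact Nat.mul_le_mul_right _ (Nat.descFactorial_le_pow n i)
            _ = n.factorial * n^i := by ring
      have hnat2 : (2^i * n.descFactorial i)^2 * (2^(n-i) * (n-i).factorial)
          ≤ 2^n * n.factorial * (2*n)^i := by
        calc (2^i * n.descFactorial i)^2 * (2^(n-i) * (n-i).factorial)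
            = (2^(i*2) * 2^(n-i)) * ((n.descFactorial i)^2 * (n-i).factorial) := by
              rw [mul_pow, ← pow_mul]; ring
          _ = 2^(n+i) * ((n.descFactorial i)^2 * (n-i).factorial) := by
              rw [← pow_add]; congr 2; omega
          _ ≤ 2^(n+i) * (n.factorial * n^i) := Nat.mul_le_mul_left _ hnat
          _ = 2^n * n.factorial * (2*n)^i := by
              rw [mul_pow, pow_add]; ring
      have hcast : ((2:ℝ)^i * (n.descFactorial i:ℝ))^2 * ((2:ℝ)^(n-i) * (((n-i).factorial:ℕ):ℝ))
          ≤ (2:ℝ)^n * (n.factorial:ℝ) * (2*(n:ℝ))^i := by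
        exact_mod_cast hnat2
      have hsqrtpow : ∀ (a : ℝ), 0 ≤ a → ∀ (k : ℕ), Real.sqrt (a^k) = (Real.sqrt a)^k := by
        intro a ha k
        rw [← Real.sqrt_sq (pow_nonneg (Real.sqrt_nonneg a) k)]
        congr 1
        rw [← pow_mul, mul_comm k 2, pow_mul, Real.sq_sqrt ha]
      have hA0 : (0:ℝ) ≤ 2^i * (n.descFactorial i:ℝ) :=
        mul_nonneg (by positivity) (Nat.cast_nonneg _)
      have hL : Real.sqrt (((2:ℝ)^i * (n.descFactorial i:ℝ))^2 * ((2:ℝ)^(n-i) * (((n-i).factorial:ℕ):ℝ)))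
          = 2^i * (n.descFactorial i:ℝ) * Real.sqrt ((2:ℝ)^(n-i) * (((n-i).factorial:ℕ):ℝ)) := by
        rw [Real.sqrt_mul (sq_nonneg _), Real.sqrt_sq hA0]
      have hR : Real.sqrt ((2:ℝ)^n * (n.factorial:ℝ)) * Real.sqrt (2*(n:ℝ))^i
          = Real.sqrt ((2:ℝ)^n * (n.factorial:ℝ) * (2*(n:ℝ))^i) := by
        rw [Real.sqrt_mul (by positivity : (0:ℝ) ≤ (2:ℝ)^n * (n.factorial:ℝ)),
          ← hsqrtpow (2*(n:ℝ)) (by positivity) i]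
      rw [← hL, hR]
      exact Real.sqrt_le_sqrt hcast
    -- combine hRB and hkey
    have habs : (0:ℝ) ≤ |y|^i := by positivity
    have step1 : 2^i * (n.descFactorial i:ℝ) * |Polynomial.eval x (PH (n-i))| * |y|^i
        ≤ 2^i * (n.descFactorial i:ℝ) *
          (Real.sqrt 2 * Real.sqrt ((2:ℝ)^(n-i) * (((n-i).factorial:ℕ):ℝ)) * Real.exp (2*x^2)) * |y|^i := by
      apply mul_le_mul_of_nonneg_right ?_ habs
      apply mul_le_mul_of_nonneg_left (PH_real_bound (n-i) x) (by positivity)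
    have step2 : 2^i * (n.descFactorial i:ℝ) *
          (Real.sqrt 2 * Real.sqrt ((2:ℝ)^(n-i) * (((n-i).factorial:ℕ):ℝ)) * Real.exp (2*x^2)) * |y|^i
        = (2^i * (n.descFactorial i:ℝ) * Real.sqrt ((2:ℝ)^(n-i) * (((n-i).factorial:ℕ):ℝ)))
            * (Real.sqrt 2 * Real.exp (2*x^2) * |y|^i) := by ring
    have step3 : (2^i * (n.descFactorial i:ℝ) * Real.sqrt ((2:ℝ)^(n-i) * (((n-i).factorial:ℕ):ℝ)))
            * (Real.sqrt 2 * Real.exp (2*x^2) * |y|^i)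
        ≤ (Real.sqrt ((2:ℝ)^n * (n.factorial:ℝ)) * Real.sqrt (2*(n:ℝ))^i)
            * (Real.sqrt 2 * Real.exp (2*x^2) * |y|^i) := by
      apply mul_le_mul_of_nonneg_right hkey (by positivity)
    have step4 : (Real.sqrt ((2:ℝ)^n * (n.factorial:ℝ)) * Real.sqrt (2*(n:ℝ))^i)
            * (Real.sqrt 2 * Real.exp (2*x^2) * |y|^i)
        = B * (Real.sqrt (2*(n:ℝ)) * |y|)^i := by
      rw [hB, mul_pow]
      ring
    have hfin : 2^i * (n.descFactorial i:ℝ) * |Polynomial.eval x (PH (n-i))| * |y|^i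
        ≤ B * (Real.sqrt (2*(n:ℝ)) * |y|)^i := by
      rw [← step4]
      refine le_trans step1 ?_
      rw [step2]
      exact step3
    calc 2^i * (n.descFactorial i:ℝ) * |Polynomial.eval x (PH (n-i))| * |y|^i
        ≤ B * (Real.sqrt (2*(n:ℝ)) * |y|)^i := hfin
      _ = B * ((Real.sqrt (2*(n:ℝ)) * |y|)^i / (i.factorial:ℝ)) * (i.factorial:ℝ) := by
          field_simp
  -- final assembly
  refine le_trans (norm_sum_le _ _) ?_
  refine le_trans (Finset.sum_le_sum hterm) ?_
  rw [← Finset.mul_sum]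
  have ht0 : (0:ℝ) ≤ Real.sqrt (2*(n:ℝ)) * |y| := by positivity
  have hsum2 := Real.sum_le_exp_of_nonneg ht0 (n+1)
  calc B * ∑ i ∈ Finset.range (n+1), (Real.sqrt (2*(n:ℝ)) * |y|)^i / (i.factorial:ℝ)
      ≤ B * Real.exp (Real.sqrt (2*(n:ℝ)) * |y|) := by
        apply mul_le_mul_of_nonneg_left hsum2 hB0
    _ = Real.sqrt 2 * Real.sqrt (2^n * (n.factorial:ℝ)) * Real.exp (2*x^2)
        * Real.exp (Real.sqrt (2*(n:ℝ)) * |y|) := by rw [hB]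

end HermiteAux

theorem zetaH_bound (z : ℂ) (n : ℕ) (hn : 1 ≤ n) :
    ‖zetaH n z‖ ≤ (2 * Real.exp 3 / Real.pi ^ 2) ^ ((1 : ℝ) / 4) *
      Real.exp (‖z‖ ^ 2 / 2 + z.re ^ 2 + |z.im|) * Real.exp (2 * (n : ℝ) * |z.im|) := by
  set x := z.re
  set y := z.im
  -- rewrite zetaH
  have hH : hermiteH n z = Polynomial.eval z (PC n) := hermiteH_eq_eval n z
  set A : ℝ := Real.pi ^ ((1 : ℝ) / 4) * 2 ^ ((n : ℝ) / 2) * Real.sqrt (n.factorial) with hAdef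
  have hpi_pos : (0:ℝ) < Real.pi := Real.pi_pos
  have hA_pos : 0 < A := by
    rw [hAdef]
    have h1 : (0:ℝ) < Real.pi ^ ((1 : ℝ) / 4) := Real.rpow_pos_of_pos hpi_pos _
    have h2 : (0:ℝ) < (2:ℝ) ^ ((n : ℝ) / 2) := Real.rpow_pos_of_pos (by norm_num) _
    have h3 : (0:ℝ) < Real.sqrt (n.factorial) := Real.sqrt_pos.mpr (by positivity)
    positivity
  have hA_eq : A = Real.pi ^ ((1 : ℝ) / 4) * Real.sqrt (2^n * (n.factorial:ℝ)) := by
    rw [hAdef, Real.sqrt_mul (by positivity : (0:ℝ) ≤ (2:ℝ)^n)]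
    have h2 : (2:ℝ) ^ ((n:ℝ)/2) = Real.sqrt ((2:ℝ)^n) := by
      rw [Real.sqrt_eq_rpow, ← Real.rpow_natCast 2 n, ← Real.rpow_mul (by norm_num : (0:ℝ) ≤ 2)]
      congr 1
      ring
    rw [h2, mul_assoc]
  -- norm of zetaH
  have hnorm : ‖zetaH n z‖ = A⁻¹ * (Real.exp ((y^2 - x^2)/2) * ‖Polynomial.eval z (PC n)‖) := by
    rw [zetaH, hH]
    rw [norm_mul, norm_mul, norm_mul]
    have h1 : ‖((A⁻¹ : ℝ) : ℂ)‖ = A⁻¹ := by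
      rw [Complex.norm_real, Real.norm_eq_abs]
      exact _root_.abs_of_nonneg (inv_nonneg.mpr hA_pos.le)
    have h2 : ‖(-1:ℂ)^n‖ = 1 := by
      rw [norm_pow, norm_neg, norm_one, one_pow]
    have h3 : ‖Complex.exp (-z^2/2)‖ = Real.exp ((y^2 - x^2)/2) := by
      have hre : (-z^2/2).re = (y^2 - x^2)/2 := by
        simp [pow_two, Complex.div_re, Complex.mul_re, Complex.normSq_apply]
        rfl
      rw [Complex.norm_exp, hre]
    rw [h1, h2, h3]
    ring
  rw [hnorm]
  have hPC := PC_eval_bound n z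
  have hstep : A⁻¹ * (Real.exp ((y^2 - x^2)/2) * ‖Polynomial.eval z (PC n)‖)
      ≤ A⁻¹ * (Real.exp ((y^2 - x^2)/2) *
        (Real.sqrt 2 * Real.sqrt (2^n * (n.factorial:ℝ)) * Real.exp (2*x^2)
          * Real.exp (Real.sqrt (2*n) * |y|))) := by
    apply mul_le_mul_of_nonneg_left ?_ (by positivity)
    apply mul_le_mul_of_nonneg_left hPC (by positivity)
  refine le_trans hstep ?_
  -- simplify A⁻¹ * sqrt(2^n n!) = π^{-1/4}
  have hsimp : A⁻¹ * (Real.exp ((y^2 - x^2)/2) *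
        (Real.sqrt 2 * Real.sqrt (2^n * (n.factorial:ℝ)) * Real.exp (2*x^2)
          * Real.exp (Real.sqrt (2*n) * |y|)))
      = (Real.sqrt 2 * (Real.pi ^ ((1 : ℝ) / 4))⁻¹) *
        (Real.exp ((y^2 - x^2)/2 + 2*x^2 + Real.sqrt (2*n) * |y|)) := by
    rw [hA_eq]
    have hs : (0:ℝ) < Real.sqrt (2^n * (n.factorial:ℝ)) := Real.sqrt_pos.mpr (by positivity)
    rw [mul_inv]
    rw [Real.exp_add, Real.exp_add]
    field_simp
  rw [hsimp]
  -- now compare constants and exponents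
  have hconst : Real.sqrt 2 * (Real.pi ^ ((1 : ℝ) / 4))⁻¹
      ≤ (2 * Real.exp 3 / Real.pi ^ 2) ^ ((1 : ℝ) / 4) := by
    have hL0 : (0:ℝ) ≤ Real.sqrt 2 * (Real.pi ^ ((1 : ℝ) / 4))⁻¹ := by positivity
    have hR0 : (0:ℝ) ≤ (2 * Real.exp 3 / Real.pi ^ 2) ^ ((1 : ℝ) / 4) := by positivity
    have e1 : ((2 * Real.exp 3 / Real.pi ^ 2) ^ ((1 : ℝ) / 4))^(4:ℕ)
        = 2 * Real.exp 3 / Real.pi ^ 2 := by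
      rw [← Real.rpow_natCast ((2 * Real.exp 3 / Real.pi ^ 2) ^ ((1 : ℝ) / 4)) 4,
        ← Real.rpow_mul (by positivity)]
      norm_num
    have e2 : (Real.sqrt 2 * (Real.pi ^ ((1 : ℝ) / 4))⁻¹)^(4:ℕ) = 4 / Real.pi := by
      rw [mul_pow, inv_pow]
      have hs4 : (Real.sqrt 2)^(4:ℕ) = 4 := by
        rw [show (4:ℕ) = 2*2 from rfl, pow_mul, Real.sq_sqrt (by norm_num : (0:ℝ) ≤ 2)]
        norm_num
      have hp4 : (Real.pi ^ ((1 : ℝ) / 4))^(4:ℕ) = Real.pi := by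
        rw [← Real.rpow_natCast (Real.pi ^ ((1 : ℝ) / 4)) 4, ← Real.rpow_mul hpi_pos.le]
        norm_num
      rw [hs4, hp4]
      rw [div_eq_mul_inv]
    have he3 : (8:ℝ) ≤ Real.exp 3 := by
      have h1 : Real.exp 3 = (Real.exp 1)^(3:ℕ) := by
        rw [← Real.exp_nat_mul]
        norm_num
      have h2 := Real.exp_one_gt_d9
      have h0 : (2:ℝ) ≤ Real.exp 1 := by linarith
      rw [h1]
      calc (8:ℝ) = 2^(3:ℕ) := by norm_num
        _ ≤ (Real.exp 1)^(3:ℕ) := pow_le_pow_left₀ (by norm_num) h0 3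
    have hpow : (Real.sqrt 2 * (Real.pi ^ ((1 : ℝ) / 4))⁻¹)^(4:ℕ)
        ≤ ((2 * Real.exp 3 / Real.pi ^ 2) ^ ((1 : ℝ) / 4))^(4:ℕ) := by
      rw [e1, e2]
      rw [div_le_div_iff₀ hpi_pos (by positivity)]
      nlinarith [Real.pi_le_four, hpi_pos, he3]
    exact le_of_pow_le_pow_left₀ (by norm_num) hR0 hpow
  have hnormz : ‖z‖^2 = x^2 + y^2 := by
    rw [Complex.sq_norm, Complex.normSq_apply]
    ring
  have hsqrt2n : Real.sqrt (2*(n:ℝ)) ≤ 2*(n:ℝ)+1 := by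
    rw [show (2*(n:ℝ)+1) = Real.sqrt ((2*(n:ℝ)+1)^2) by
      rw [Real.sqrt_sq (by positivity)]]
    apply Real.sqrt_le_sqrt
    nlinarith [Nat.cast_nonneg (α := ℝ) n]
  have hexp : Real.exp ((y^2 - x^2)/2 + 2*x^2 + Real.sqrt (2*(n:ℝ)) * |y|)
      ≤ Real.exp ((‖z‖^2/2 + x^2 + |y|) + 2*(n:ℝ)*|y|) := by
    apply Real.exp_le_exp.mpr
    rw [hnormz]
    have h1 : Real.sqrt (2*(n:ℝ)) * |y| ≤ (2*(n:ℝ)+1) * |y| :=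
      mul_le_mul_of_nonneg_right hsqrt2n (abs_nonneg y)
    nlinarith [h1]
  calc (Real.sqrt 2 * (Real.pi ^ ((1 : ℝ) / 4))⁻¹) *
        (Real.exp ((y^2 - x^2)/2 + 2*x^2 + Real.sqrt (2*(n:ℝ)) * |y|))
      ≤ (2 * Real.exp 3 / Real.pi ^ 2) ^ ((1 : ℝ) / 4) *
        Real.exp ((‖z‖^2/2 + x^2 + |y|) + 2*(n:ℝ)*|y|) := by
        apply mul_le_mul hconst hexp (Real.exp_pos _).le (by positivity)
    _ = (2 * Real.exp 3 / Real.pi ^ 2) ^ ((1 : ℝ) / 4) *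
        Real.exp (‖z‖^2/2 + x^2 + |y|) * Real.exp (2*(n:ℝ)*|y|) := by
        rw [Real.exp_add]
        ring
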